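/- Let $h : \mathcal{S}\times\mathcal{X} \to \mathbb{Z}_q^m$ be a 2-universal hash function, i.e., for all distinct $x_1 \ne x_2$, $\Pr_{S}[h(S,x_1)=h(S,x_2)] \le q^{-m}$ where $S$ is uniform on $\mathcal{S}$. Let $X$ be a random variable on $\mathcal{X}$ independent of $S$, and $U$ uniform on $\mathbb{Z}_q^m$. Then $q^{D_2(P_{(h(S,X),S)} \| P_U \times P_S)} \le 1 + q^{m - H_2(X)}$, where $H_2(X) = -\log_q \sum_x P_X(x)^2$ is the collision entropy. -/
import Mathlib


open Finset

/-- Joint pmf of the pair `(h(S,X), S)` where `S` is uniform on `𝒮` and `X ~ P` is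
independent of `S`. -/
noncomputable def jointPMF {S X : Type*} [Fintype S] [Fintype X] {q m : ℕ}
    (h : S → X → (Fin m → Fin q)) (P : X → ℝ) : (Fin m → Fin q) × S → ℝ :=
  fun p => (Fintype.card S : ℝ)⁻¹ * ∑ x : X, if h p.2 x = p.1 then P x else 0

/-- Leftover hash lemma, order-2 bound: for a 2-universal hash function,
`q^{D₂(P_{(h(S,X),S)} ‖ P_U × P_S)} ≤ 1 + q^{m - H₂(X)}`. -/
theorem lhl_order_two {S X : Type*} [Fintype S] [Fintype X] [Nonempty S] [Nonempty X]
    (q m : ℕ) (hq : 2 ≤ q) (hm : 1 ≤ m)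
    (h : S → X → (Fin m → Fin q)) (P : X → ℝ)
    (hP0 : ∀ x, 0 ≤ P x) (hP1 : ∑ x, P x = 1)
    (hUniv : ∀ x₁ x₂ : X, x₁ ≠ x₂ →
      ((univ.filter fun s : S => h s x₁ = h s x₂).card : ℝ) / (Fintype.card S : ℝ)
        ≤ ((q : ℝ) ^ m)⁻¹) :
    (q : ℝ) ^ (Real.logb q (∑ z : (Fin m → Fin q) × S,
        (jointPMF h P z) ^ 2 / (((q : ℝ) ^ m)⁻¹ * (Fintype.card S : ℝ)⁻¹)))
      ≤ 1 + (q : ℝ) ^ ((m : ℝ) - (-Real.logb q (∑ x, P x ^ 2))) := by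
  classical
  have hq1 : (1:ℝ) < (q:ℝ) := by exact_mod_cast Nat.lt_of_lt_of_le one_lt_two hq
  have hq0 : (0:ℝ) < (q:ℝ) := by linarith
  have hqne1 : (q:ℝ) ≠ 1 := ne_of_gt hq1
  set cS : ℝ := (Fintype.card S : ℝ) with hcS
  have hcS0 : 0 < cS := by rw [hcS]; exact_mod_cast Fintype.card_pos
  set Qm : ℝ := (q:ℝ)^m with hQm
  have hQm0 : 0 < Qm := pow_pos hq0 m
  set c2 : ℝ := ∑ x, P x ^ 2 with hc2
  have hc2pos : 0 < c2 := by
    obtain ⟨x, hx⟩ := Finset.exists_ne_zero_of_sum_ne_zero (by rw [hP1]; norm_num :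
      ∑ x : X, P x ≠ 0)
    have hxpos : 0 < P x ^ 2 := pow_pos ((hP0 x).lt_of_ne (Ne.symm hx.2)) 2
    rw [hc2]
    exact lt_of_lt_of_le hxpos (Finset.single_le_sum (f := fun x => P x ^ 2)
      (fun i _ => sq_nonneg _) (mem_univ x))
  set N : X → X → ℝ := fun x y => ((univ.filter fun s : S => h s x = h s y).card : ℝ) with hN
  -- key identity
  have hkey : ∑ z : (Fin m → Fin q) × S, (jointPMF h P z)^2
      = (cS⁻¹)^2 * ∑ x : X, ∑ y : X, P x * P y * N x y := by
    unfold jointPMF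
    rw [Fintype.sum_prod_type]
    simp only [mul_pow, ← Finset.mul_sum]
    congr 1
    rw [Finset.sum_comm]
    have step1 : ∀ s : S, ∑ u : Fin m → Fin q, (∑ x : X, if h s x = u then P x else 0)^2
        = ∑ x : X, ∑ y : X, if h s x = h s y then P x * P y else 0 := by
      intro s
      have : ∀ u, (∑ x : X, if h s x = u then P x else 0)^2
          = ∑ x : X, ∑ y : X, (if h s x = u then P x else 0) * (if h s y = u then P y else 0) := by
        intro u
        rw [pow_two, Finset.sum_mul_sum]
      simp only [this]
      rw [Finset.sum_comm]
      congr 1; ext x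
      rw [Finset.sum_comm]
      congr 1; ext y
      simp only [ite_mul, zero_mul, mul_ite, mul_zero]
      rw [Finset.sum_ite_eq]
      simp [eq_comm]
    simp only [step1]
    rw [Finset.sum_comm]
    congr 1; ext x
    rw [Finset.sum_comm]
    congr 1; ext y
    rw [← Finset.sum_filter, Finset.sum_const, nsmul_eq_mul, mul_comm]
  set T : ℝ := ∑ z : (Fin m → Fin q) × S,
      (jointPMF h P z) ^ 2 / (((q : ℝ) ^ m)⁻¹ * cS⁻¹) with hT
  have hTval : T = Qm * cS⁻¹ * ∑ x : X, ∑ y : X, P x * P y * N x y := by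
    rw [hT, ← Finset.sum_div, hkey]
    field_simp
    ring
  -- bounds on the double sum
  have hNxx : ∀ x : X, N x x = cS := by
    intro x
    simp [hN, hcS, Finset.filter_true_of_mem]
  have hNle : ∀ x y : X, x ≠ y → N x y ≤ cS * Qm⁻¹ := by
    intro x y hxy
    have := hUniv x y hxy
    rw [div_le_iff₀ hcS0] at this
    calc N x y ≤ Qm⁻¹ * cS := this
      _ = cS * Qm⁻¹ := by ring
  have hdiag : ∑ x : X, P x * P x * N x x = cS * c2 := by
    simp only [hNxx]
    rw [hc2, Finset.mul_sum]
    congr 1; ext x; ring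
  have hsplit : ∀ x : X, ∑ y : X, P x * P y * N x y
      = P x * P x * N x x + ∑ y ∈ univ.erase x, P x * P y * N x y := by
    intro x
    exact (Finset.add_sum_erase univ _ (mem_univ x)).symm
  have hoff_le : ∑ x : X, ∑ y ∈ univ.erase x, P x * P y * N x y ≤ cS * Qm⁻¹ := by
    have h1 : ∑ x : X, ∑ y ∈ univ.erase x, P x * P y * N x y
        ≤ ∑ x : X, ∑ y ∈ univ.erase x, P x * P y * (cS * Qm⁻¹) := by
      apply Finset.sum_le_sum; intro x _
      apply Finset.sum_le_sum; intro y hy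
      have hxy : x ≠ y := (Finset.ne_of_mem_erase hy).symm
      have := hNle x y hxy
      have hPP : 0 ≤ P x * P y := mul_nonneg (hP0 x) (hP0 y)
      calc P x * P y * N x y ≤ P x * P y * (cS * Qm⁻¹) := by
            exact mul_le_mul_of_nonneg_left this hPP
        _ = P x * P y * (cS * Qm⁻¹) := rfl
    have h2 : ∑ x : X, ∑ y ∈ univ.erase x, P x * P y * (cS * Qm⁻¹)
        ≤ ∑ x : X, ∑ y : X, P x * P y * (cS * Qm⁻¹) := by
      apply Finset.sum_le_sum; intro x _
      apply Finset.sum_le_sum_of_subset_of_nonneg (Finset.erase_subset _ _)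
      intro y _ _
      have : 0 ≤ cS * Qm⁻¹ := by positivity
      exact mul_nonneg (mul_nonneg (hP0 x) (hP0 y)) this
    have h3 : ∑ x : X, ∑ y : X, P x * P y * (cS * Qm⁻¹) = cS * Qm⁻¹ := by
      have : ∑ x : X, ∑ y : X, P x * P y * (cS * Qm⁻¹)
          = (∑ x, P x) * (∑ y, P y) * (cS * Qm⁻¹) := by
        rw [Finset.sum_mul_sum, Finset.sum_mul]
        congr 1; ext x
        rw [Finset.sum_mul]
      rw [this, hP1]; ring
    linarith
  have hoff_ge : 0 ≤ ∑ x : X, ∑ y ∈ univ.erase x, P x * P y * N x y := by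
    apply Finset.sum_nonneg; intro x _
    apply Finset.sum_nonneg; intro y _
    have : (0:ℝ) ≤ N x y := by positivity
    exact mul_nonneg (mul_nonneg (hP0 x) (hP0 y)) this
  have hsum_eq : ∑ x : X, ∑ y : X, P x * P y * N x y
      = cS * c2 + ∑ x : X, ∑ y ∈ univ.erase x, P x * P y * N x y := by
    calc ∑ x : X, ∑ y : X, P x * P y * N x y
        = ∑ x : X, (P x * P x * N x x + ∑ y ∈ univ.erase x, P x * P y * N x y) := by
          apply Finset.sum_congr rfl; intro x _; exact hsplit x
      _ = ∑ x : X, P x * P x * N x x + ∑ x : X, ∑ y ∈ univ.erase x, P x * P y * N x y :=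
          Finset.sum_add_distrib
      _ = cS * c2 + _ := by rw [hdiag]
  have hTle : T ≤ 1 + Qm * c2 := by
    rw [hTval, hsum_eq]
    have : Qm * cS⁻¹ * (cS * c2 + ∑ x : X, ∑ y ∈ univ.erase x, P x * P y * N x y)
        ≤ Qm * cS⁻¹ * (cS * c2 + cS * Qm⁻¹) := by
      apply mul_le_mul_of_nonneg_left _ (by positivity)
      linarith
    calc Qm * cS⁻¹ * (cS * c2 + ∑ x : X, ∑ y ∈ univ.erase x, P x * P y * N x y)
        ≤ Qm * cS⁻¹ * (cS * c2 + cS * Qm⁻¹) := this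
      _ = 1 + Qm * c2 := by field_simp; ring
  have hTpos : 0 < T := by
    rw [hTval, hsum_eq]
    have : 0 < cS * c2 + ∑ x : X, ∑ y ∈ univ.erase x, P x * P y * N x y := by
      have := mul_pos hcS0 hc2pos; linarith
    positivity
  rw [Real.rpow_logb hq0 hqne1 hTpos]
  rw [sub_neg_eq_add, Real.rpow_add hq0, Real.rpow_natCast,
    Real.rpow_logb hq0 hqne1 hc2pos]
  exact hTle
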